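/- Let N, d be positive integers and let U be a unitary matrix indexed by Fin N × Fin d. Then the Environment Right-Action Algebra A_r(U) is commutative (∀ a b ∈ A_r(U), a*b = b*a) if and only if there exist orthonormal bases (φ_i)_{i ∈ Fin d} and (ψ_i)_{i ∈ Fin d} of ℂ^d and unitary matrices U₁, …, U_d : Matrix (Fin N) (Fin N) ℂ such that U = ∑_{i=1}^{d} U_i ⊗ |φ_i⟩⟨ψ_i|, where |φ⟩⟨ψ| denotes the rank-one matrix with entries (|φ⟩⟨ψ|) k l = φ k * conj (ψ l). -/

import Mathlib

open scoped Kronecker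
open Matrix

/-- The slice `M(f,g)` of an operator on `ℂ^N ⊗ ℂ^d`: the partial trace `Tr_{|g⟩⟨f|}[M]`,
given by `M(f,g) k l = ∑ i j, conj (f i) * g j * M (i,k) (j,l)`. -/
noncomputable def envSlice {N d : ℕ} (M : Matrix (Fin N × Fin d) (Fin N × Fin d) ℂ)
    (f g : Fin N → ℂ) : Matrix (Fin d) (Fin d) ℂ :=
  Matrix.of fun k l => ∑ i, ∑ j, (starRingEnd ℂ) (f i) * g j * M (i, k) (j, l)

/-- The Environment Algebra `A(U)`: the unital star-subalgebra generated by all slices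
`U(f,g)` and `Uᴴ(f,g)`. -/
noncomputable def envAlg {N d : ℕ} (U : Matrix (Fin N × Fin d) (Fin N × Fin d) ℂ) :
    StarSubalgebra ℂ (Matrix (Fin d) (Fin d) ℂ) :=
  StarAlgebra.adjoin ℂ
    ({A | ∃ f g, A = envSlice U f g} ∪ {A | ∃ f g, A = envSlice Uᴴ f g})

/-- The Environment Right-Action Algebra `A_r(U)`: the unital star-subalgebra generated by all
products `Uᴴ(f₁,g₁) * U(f₂,g₂)`. -/
noncomputable def envActAlg {N d : ℕ} (U : Matrix (Fin N × Fin d) (Fin N × Fin d) ℂ) :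
    StarSubalgebra ℂ (Matrix (Fin d) (Fin d) ℂ) :=
  StarAlgebra.adjoin ℂ
    {A | ∃ f₁ g₁ f₂ g₂, A = envSlice Uᴴ f₁ g₁ * envSlice U f₂ g₂}

namespace EnvAux
noncomputable section
open scoped InnerProductSpace

local notation "conj'" => starRingEnd ℂ

lemma conj_sum_mul {d : ℕ} (x y : Fin d → ℂ) :
    conj' (∑ k, conj' (x k) * y k) = ∑ k, x k * conj' (y k) := by
  simp only [map_sum, _root_.map_mul, starRingEnd_self_apply]

/-- completeness relation from row-orthonormality -/
lemma rows_complete {d : ℕ} (ψ : Fin d → Fin d → ℂ)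
    (h : ∀ i j, ∑ k, conj' (ψ i k) * ψ j k = if i = j then 1 else 0) :
    ∀ k l, ∑ t, ψ t k * conj' (ψ t l) = if k = l then 1 else 0 := by
  intro k l
  set P : Matrix (Fin d) (Fin d) ℂ := Matrix.of fun i k => ψ i k with hPdef
  have hPP : P * Pᴴ = 1 := by
    ext i j
    have h2 := congrArg conj' (h i j)
    rw [conj_sum_mul] at h2
    simp only [Matrix.mul_apply, Matrix.conjTranspose_apply, Matrix.one_apply, hPdef,
      Matrix.of_apply, Matrix.star_apply, ← starRingEnd_apply]
    rw [show (∑ x, ψ i x * conj' (ψ j x)) = conj' (if i = j then (1:ℂ) else 0) from by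
      rw [← h2]]
    by_cases hij : i = j <;> simp [hij, eq_comm]
  have hPP' : Pᴴ * P = 1 := mul_eq_one_comm.mp hPP
  have h3 := congrFun (congrFun hPP' k) l
  simp only [Matrix.mul_apply, Matrix.conjTranspose_apply, Matrix.one_apply, hPdef,
    Matrix.of_apply, Matrix.star_apply, ← starRingEnd_apply] at h3
  have h4 := congrArg conj' h3
  rw [conj_sum_mul] at h4
  rw [h4]
  split <;> simp


lemma sum_rotate {α β γ : Type*} [Fintype α] [Fintype β] [Fintype γ] (F : α → β → γ → ℂ) :
    ∑ i, ∑ j, ∑ t, F i j t = ∑ t, ∑ i, ∑ j, F i j t :=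
  (Finset.sum_congr rfl fun _ _ => Finset.sum_comm).trans Finset.sum_comm

section DiagSection
variable {d : ℕ} (ψ : Fin d → Fin d → ℂ)

/-- rank one projector onto ψ t -/
def proj (t : Fin d) : Matrix (Fin d) (Fin d) ℂ :=
  Matrix.of fun k l => ψ t k * conj' (ψ t l)

variable (hψ : ∀ i j, ∑ k, conj' (ψ i k) * ψ j k = if i = j then 1 else 0)

include hψ

lemma proj_sum : ∑ t, proj ψ t = 1 := by
  ext k l
  simp only [Matrix.sum_apply, proj, Matrix.of_apply, Matrix.one_apply]
  exact rows_complete ψ hψ k l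

lemma proj_mul (t s : Fin d) :
    proj ψ t * proj ψ s = if t = s then proj ψ t else 0 := by
  ext k l
  simp only [Matrix.mul_apply, proj, Matrix.of_apply]
  calc ∑ m, ψ t k * conj' (ψ t m) * (ψ s m * conj' (ψ s l))
      = (ψ t k * conj' (ψ s l)) * ∑ m, conj' (ψ t m) * ψ s m := by
        rw [Finset.mul_sum]; exact Finset.sum_congr rfl fun _ _ => by ring
    _ = (if t = s then ψ t k * conj' (ψ t l) else 0) := by
        rw [hψ t s]
        by_cases h : t = s <;> simp [h]
    _ = _ := by by_cases h : t = s <;> simp [h, proj]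

/-- The commutative diagonal algebra hom -/
def diagHom : (Fin d → ℂ) →ₐ[ℂ] Matrix (Fin d) (Fin d) ℂ where
  toFun μ := ∑ t, μ t • proj ψ t
  map_one' := by simp only [Pi.one_apply, one_smul]; exact proj_sum ψ hψ
  map_mul' μ ν := by
    rw [Finset.sum_mul_sum]
    have : ∀ t s, (μ t • proj ψ t) * (ν s • proj ψ s)
        = (μ t * ν s) • (if t = s then proj ψ t else 0) := by
      intro t s; rw [← proj_mul ψ hψ, smul_mul_assoc, mul_smul_comm, smul_smul]
    simp only [this]
    rw [Finset.sum_congr rfl fun t _ => Finset.sum_congr rfl fun s _ => by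
      rw [smul_ite, smul_zero]]
    simp only [Finset.sum_ite_eq, Finset.mem_univ, if_true]
    exact Finset.sum_congr rfl fun t _ => by simp [Pi.mul_apply]
  map_zero' := by simp
  map_add' μ ν := by simp [add_smul, Finset.sum_add_distrib]
  commutes' c := by
    simp only [Pi.algebraMap_apply, Algebra.algebraMap_self, RingHom.id_apply]
    rw [show (∑ t, c • proj ψ t) = c • ∑ t, proj ψ t from (Finset.smul_sum).symm,
      proj_sum ψ hψ, Algebra.algebraMap_eq_smul_one]

omit hψ in
lemma proj_star (t : Fin d) : (proj ψ t)ᴴ = proj ψ t := by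
  ext k l; simp [proj, Matrix.conjTranspose_apply, mul_comm, ← starRingEnd_apply]

/-- The commutative diagonal star algebra -/
lemma diagHom_star (μ : Fin d → ℂ) :
    star (diagHom ψ hψ μ) = diagHom ψ hψ (fun t => conj' (μ t)) := by
  show star (∑ t, μ t • proj ψ t) = ∑ t, conj' (μ t) • proj ψ t
  rw [star_sum]
  exact Finset.sum_congr rfl fun t _ => by
    rw [star_smul, show ∀ A : Matrix (Fin d) (Fin d) ℂ, star A = Aᴴ from fun _ => rfl,
      proj_star]; rfl

def diagAlg : StarSubalgebra ℂ (Matrix (Fin d) (Fin d) ℂ) where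
  toSubalgebra := (diagHom ψ hψ).range
  star_mem' := by
    rintro a ⟨μ, rfl⟩
    exact ⟨fun t => conj' (μ t), (diagHom_star ψ hψ μ).symm⟩

lemma diagAlg_comm {a b : Matrix (Fin d) (Fin d) ℂ}
    (ha : a ∈ diagAlg ψ hψ) (hb : b ∈ diagAlg ψ hψ) : a * b = b * a := by
  obtain ⟨μ, rfl⟩ := ha
  obtain ⟨ν, rfl⟩ := hb
  show diagHom ψ hψ μ * diagHom ψ hψ ν = diagHom ψ hψ ν * diagHom ψ hψ μ
  rw [← _root_.map_mul, ← _root_.map_mul, mul_comm]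

end DiagSection


lemma envSlice_rankones {N d : ℕ} (M : Matrix (Fin N × Fin d) (Fin N × Fin d) ℂ)
    (A : Fin d → Matrix (Fin N) (Fin N) ℂ) (x y : Fin d → Fin d → ℂ)
    (hM : ∀ i k j l, M (i,k) (j,l) = ∑ t, A t i j * (x t k * conj' (y t l)))
    (f g : Fin N → ℂ) :
    envSlice M f g
      = ∑ t, (∑ i, ∑ j, conj' (f i) * g j * A t i j) •
          Matrix.of (fun k l => x t k * conj' (y t l)) := by
  ext k l
  show ∑ i, ∑ j, conj' (f i) * g j * M (i,k) (j,l) = _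
  simp only [hM, Finset.mul_sum]
  rw [sum_rotate]
  simp only [Matrix.sum_apply, Matrix.smul_apply, Matrix.of_apply, smul_eq_mul,
    Finset.sum_mul]
  exact Finset.sum_congr rfl fun t _ => Finset.sum_congr rfl fun i _ =>
    Finset.sum_congr rfl fun j _ => by ring

lemma kron_entry {N d : ℕ} (Uop : Fin d → Matrix (Fin N) (Fin N) ℂ)
    (φ ψ : Fin d → Fin d → ℂ)
    {U : Matrix (Fin N × Fin d) (Fin N × Fin d) ℂ}
    (hUeq : U = ∑ t, Uop t ⊗ₖ Matrix.of (fun k l => φ t k * conj' (ψ t l))) :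
    ∀ i k j l, U (i,k) (j,l) = ∑ t, Uop t i j * (φ t k * conj' (ψ t l)) := by
  intro i k j l
  rw [hUeq]
  simp [Matrix.sum_apply, Matrix.kroneckerMap_apply]

lemma kron_entry_conj {N d : ℕ} (Uop : Fin d → Matrix (Fin N) (Fin N) ℂ)
    (φ ψ : Fin d → Fin d → ℂ)
    {U : Matrix (Fin N × Fin d) (Fin N × Fin d) ℂ}
    (hUeq : U = ∑ t, Uop t ⊗ₖ Matrix.of (fun k l => φ t k * conj' (ψ t l))) :
    ∀ i k j l, Uᴴ (i,k) (j,l)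
      = ∑ t, (fun t => Matrix.of fun i j => conj' (Uop t j i)) t i j
          * (ψ t k * conj' (φ t l)) := by
  intro i k j l
  rw [Matrix.conjTranspose_apply, ← starRingEnd_apply, kron_entry Uop φ ψ hUeq]
  simp only [map_sum, _root_.map_mul, starRingEnd_self_apply, Matrix.of_apply]
  exact Finset.sum_congr rfl fun t _ => by ring


lemma rankone_mul {d : ℕ} (x y z w : Fin d → ℂ) :
    Matrix.of (fun k l => x k * conj' (y l)) * Matrix.of (fun k l => z k * conj' (w l))
      = (∑ m, conj' (y m) * z m) • Matrix.of (fun k l => x k * conj' (w l)) := by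
  ext k l
  simp only [Matrix.mul_apply, Matrix.smul_apply, Matrix.of_apply, smul_eq_mul,
    Finset.sum_mul]
  exact Finset.sum_congr rfl fun m _ => by ring

lemma rankone_sums_mul {d : ℕ} {φ ψ : Fin d → Fin d → ℂ}
    (hφ : ∀ i j, ∑ k, conj' (φ i k) * φ j k = if i = j then 1 else 0)
    (e c : Fin d → ℂ) :
    (∑ t, e t • Matrix.of (fun k l => ψ t k * conj' (φ t l)))
        * (∑ s, c s • Matrix.of (fun k l => φ s k * conj' (ψ s l)))
      = ∑ t, (e t * c t) • proj ψ t := by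
  rw [Finset.sum_mul_sum]
  have key : ∀ t s, (e t • Matrix.of (fun k l => ψ t k * conj' (φ t l)))
      * (c s • Matrix.of (fun k l => φ s k * conj' (ψ s l)))
      = if t = s then (e t * c s) • proj ψ t else 0 := by
    intro t s
    rw [smul_mul_assoc, mul_smul_comm, smul_smul, rankone_mul, hφ t s]
    by_cases h : t = s
    · subst h; simp [proj]
    · simp [h]
  simp only [key]
  simp only [Finset.sum_ite_eq, Finset.mem_univ, if_true]


lemma backward {N d : ℕ} (U : Matrix (Fin N × Fin d) (Fin N × Fin d) ℂ)
    (φ ψ : Fin d → Fin d → ℂ) (Uop : Fin d → Matrix (Fin N) (Fin N) ℂ)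
    (hφ : ∀ i j, ∑ k, conj' (φ i k) * φ j k = if i = j then 1 else 0)
    (hψ : ∀ i j, ∑ k, conj' (ψ i k) * ψ j k = if i = j then 1 else 0)
    (hUeq : U = ∑ i, Uop i ⊗ₖ Matrix.of (fun k l => φ i k * conj' (ψ i l))) :
    ∀ a ∈ envActAlg U, ∀ b ∈ envActAlg U, a * b = b * a := by
  have hgen : {A | ∃ f₁ g₁ f₂ g₂, A = envSlice Uᴴ f₁ g₁ * envSlice U f₂ g₂}
      ⊆ (diagAlg ψ hψ : Set (Matrix (Fin d) (Fin d) ℂ)) := by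
    rintro A ⟨f₁, g₁, f₂, g₂, rfl⟩
    rw [envSlice_rankones Uᴴ _ ψ φ (kron_entry_conj Uop φ ψ hUeq) f₁ g₁,
        envSlice_rankones U Uop φ ψ (kron_entry Uop φ ψ hUeq) f₂ g₂,
        rankone_sums_mul hφ _ _]
    exact ⟨_, rfl⟩
  have hle : envActAlg U ≤ diagAlg ψ hψ := StarAlgebra.adjoin_le hgen
  intro a ha b hb
  exact diagAlg_comm ψ hψ (hle ha) (hle hb)


lemma exists_onb_subordinate {E : Type*} {ι : Type*} [NormedAddCommGroup E]
    [InnerProductSpace ℂ E] [FiniteDimensional ℂ E] {dd : ℕ}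
    [DecidableEq ι] (hdd : Module.finrank ℂ E = dd) (V : ι → Submodule ℂ E)
    (hInt : DirectSum.IsInternal V)
    (hOrth : OrthogonalFamily ℂ (fun i => ↥(V i)) (fun i => (V i).subtypeₗᵢ)) :
    ∃ bas : OrthonormalBasis (Fin dd) ℂ E, ∀ l, ∃ i, bas l ∈ V i := by
  classical
  letI : Fintype {i // V i ≠ ⊥} := hInt.submodule_iSupIndep.fintypeNeBotOfFiniteDimensional
  have hInt' : DirectSum.IsInternal (fun i : {i // V i ≠ ⊥} => V i.1) :=
    DirectSum.isInternal_ne_bot_iff.mpr hInt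
  have hOrth' : OrthogonalFamily ℂ (fun i : {i // V i ≠ ⊥} => ↥(V i.1))
      (fun i => (V i.1).subtypeₗᵢ) := fun {i j} hij => hOrth fun h => hij (Subtype.ext h)
  refine ⟨hInt'.subordinateOrthonormalBasis hdd hOrth', fun l => ?_⟩
  exact ⟨_, hInt'.subordinateOrthonormalBasis_subordinate hdd l hOrth'⟩


/-- matrices having `x` as eigenvector form a submodule -/
def eigMod {d : ℕ} (x : EuclideanSpace ℂ (Fin d)) :
    Submodule ℂ (Matrix (Fin d) (Fin d) ℂ) where
  carrier := {A | ∃ μ : ℂ, Matrix.toEuclideanLin A x = μ • x}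
  add_mem' := by
    rintro A B ⟨μ, hμ⟩ ⟨ν, hν⟩
    exact ⟨μ + ν, by rw [map_add, LinearMap.add_apply, hμ, hν, add_smul]⟩
  zero_mem' := ⟨0, by simp⟩
  smul_mem' := by
    rintro c A ⟨μ, hμ⟩
    exact ⟨c * μ, by rw [_root_.map_smul, LinearMap.smul_apply, hμ, smul_smul]⟩

lemma herm_decomp {d : ℕ} (a : Matrix (Fin d) (Fin d) ℂ) :
    a = (2⁻¹ : ℂ) • (a + aᴴ) + Complex.I • ((Complex.I * 2⁻¹) • (aᴴ - a)) := by
  rw [smul_smul]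
  have h3 : Complex.I * (Complex.I * 2⁻¹) = -2⁻¹ := by
    rw [← mul_assoc, Complex.I_mul_I]; ring
  rw [h3]
  module

lemma herm_re {d : ℕ} (a : Matrix (Fin d) (Fin d) ℂ) :
    ((2⁻¹ : ℂ) • (a + aᴴ)).IsHermitian := by
  unfold Matrix.IsHermitian
  rw [Matrix.conjTranspose_smul, Matrix.conjTranspose_add,
    Matrix.conjTranspose_conjTranspose, add_comm]
  congr 1
  simp

lemma herm_im {d : ℕ} (a : Matrix (Fin d) (Fin d) ℂ) :
    ((Complex.I * 2⁻¹ : ℂ) • (aᴴ - a)).IsHermitian := by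
  unfold Matrix.IsHermitian
  rw [Matrix.conjTranspose_smul, Matrix.conjTranspose_sub,
    Matrix.conjTranspose_conjTranspose]
  have : star (Complex.I * 2⁻¹ : ℂ) = -(Complex.I * 2⁻¹) := by
    simp [Complex.star_def]
  rw [this, neg_smul, ← smul_neg, neg_sub]

set_option maxHeartbeats 1000000 in
/-- Existence of a simultaneous eigenbasis for a commutative envActAlg. -/
lemma exists_eigenbasis {N d : ℕ} (U : Matrix (Fin N × Fin d) (Fin N × Fin d) ℂ)
    (hcom : ∀ a ∈ envActAlg U, ∀ b ∈ envActAlg U, a * b = b * a) :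
    ∃ bas : OrthonormalBasis (Fin d) ℂ (EuclideanSpace ℂ (Fin d)),
      ∀ a ∈ envActAlg U, ∀ l, ∃ μ : ℂ,
        Matrix.toEuclideanLin a (bas l) = μ • bas l := by
  classical
  set S : Submodule ℂ (Matrix (Fin d) (Fin d) ℂ) :=
    Subalgebra.toSubmodule (envActAlg U).toSubalgebra with hS
  have hmemS : ∀ m : Matrix (Fin d) (Fin d) ℂ, m ∈ S ↔ m ∈ envActAlg U := fun m => Iff.rfl
  set n := Module.finrank ℂ S with hn
  set bs : Module.Basis (Fin n) ℂ S := Module.finBasis ℂ S with hbs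
  set elt : Fin n × Bool → Matrix (Fin d) (Fin d) ℂ := fun p =>
    if p.2 then (2⁻¹ : ℂ) • ((bs p.1 : Matrix (Fin d) (Fin d) ℂ) + (bs p.1 : Matrix (Fin d) (Fin d) ℂ)ᴴ)
    else (Complex.I * 2⁻¹ : ℂ) • ((bs p.1 : Matrix (Fin d) (Fin d) ℂ)ᴴ - (bs p.1 : Matrix (Fin d) (Fin d) ℂ)) with helt
  have heltmem : ∀ p, elt p ∈ envActAlg U := by
    rintro ⟨i, b⟩
    have h0 : (bs i : Matrix (Fin d) (Fin d) ℂ) ∈ envActAlg U := (hmemS _).mp (bs i).2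
    cases b
    · exact SMulMemClass.smul_mem _ (sub_mem (star_mem h0) h0)
    · exact SMulMemClass.smul_mem _ (add_mem h0 (star_mem h0))
  have helthm : ∀ p, (elt p).IsHermitian := by
    rintro ⟨i, b⟩
    cases b
    · exact herm_im _
    · exact herm_re _
  set T : Fin n × Bool → Module.End ℂ (EuclideanSpace ℂ (Fin d)) :=
    fun p => Matrix.toEuclideanLin (elt p) with hT
  have hsym : ∀ p, (T p).IsSymmetric := fun p =>
    (Matrix.isHermitian_iff_isSymmetric).mp (helthm p)
  have hmulT : ∀ A B : Matrix (Fin d) (Fin d) ℂ,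
      (Matrix.toEuclideanLin A) * (Matrix.toEuclideanLin B)
        = Matrix.toEuclideanLin (A * B) := by
    intro A B
    refine LinearMap.ext fun x => ?_
    show Matrix.toEuclideanLin A (Matrix.toEuclideanLin B x) = _
    simp [Matrix.toEuclideanLin_apply, Matrix.mulVec_mulVec]
  have hcommT : Pairwise (Function.onFun Commute T) := by
    intro p q _
    show T p * T q = T q * T p
    rw [hT]
    simp only
    rw [hmulT, hmulT, hcom _ (heltmem p) _ (heltmem q)]
  have hInt := LinearMap.IsSymmetric.LinearMap.IsSymmetric.directSum_isInternal_of_pairwise_commute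
    hsym hcommT
  have hOrthFam := LinearMap.IsSymmetric.orthogonalFamily_iInf_eigenspaces hsym
  obtain ⟨bas, hbsub⟩ := exists_onb_subordinate finrank_euclideanSpace_fin
    (fun χ : (Fin n × Bool) → ℂ => ⨅ p, Module.End.eigenspace (T p) (χ p)) hInt hOrthFam
  refine ⟨bas, ?_⟩
  intro a ha l
  obtain ⟨χ, hχ⟩ := hbsub l
  have helt_eig : ∀ p, elt p ∈ eigMod (bas l) := fun p =>
    ⟨χ p, Module.End.mem_eigenspace_iff.mp ((Submodule.mem_iInf _).mp hχ p)⟩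
  have hbs_eig : ∀ i : Fin n, (bs i : Matrix (Fin d) (Fin d) ℂ) ∈ eigMod (bas l) := by
    intro i
    have := herm_decomp (bs i : Matrix (Fin d) (Fin d) ℂ)
    rw [this]
    exact add_mem (helt_eig (i, true)) (Submodule.smul_mem _ _ (helt_eig (i, false)))
  have ha_eig : a ∈ eigMod (bas l) := by
    have hsum : a = ∑ i, (bs.repr ⟨a, (hmemS a).mpr ha⟩ i) • (bs i : Matrix (Fin d) (Fin d) ℂ) := by
      have := bs.sum_repr ⟨a, (hmemS a).mpr ha⟩
      have h4 := congrArg (Submodule.subtype S) this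
      simp only [map_sum, _root_.map_smul, Submodule.coe_subtype] at h4
      exact h4.symm
    rw [hsum]
    exact Submodule.sum_mem _ fun i _ => Submodule.smul_mem _ _ (hbs_eig i)
  exact ha_eig


lemma sum_swap_pairs {α β γ δ : Type*} [Fintype α] [Fintype β] [Fintype γ] [Fintype δ]
    (F : α → β → γ → δ → ℂ) :
    ∑ a, ∑ b, ∑ c, ∑ e, F a b c e = ∑ c, ∑ e, ∑ a, ∑ b, F a b c e :=
  (sum_rotate (fun a b c => ∑ e, F a b c e)).trans
    (Finset.sum_congr rfl fun c _ => sum_rotate (fun a b e => F a b c e))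

lemma sum_factor {d : ℕ} (x y : Fin d → ℂ) (P Q : Fin d → Fin d → ℂ) :
    ∑ k', ∑ l', x k' * ((∑ m, P k' m * Q l' m) * y l')
      = ∑ m, (∑ k', x k' * P k' m) * (∑ l', y l' * Q l' m) := by
  calc ∑ k', ∑ l', x k' * ((∑ m, P k' m * Q l' m) * y l')
      = ∑ k', ∑ l', ∑ m, x k' * P k' m * (y l' * Q l' m) := by
        refine Finset.sum_congr rfl fun k' _ => Finset.sum_congr rfl fun l' _ => ?_
        rw [Finset.sum_mul, Finset.mul_sum]
        exact Finset.sum_congr rfl fun m _ => by ring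
    _ = ∑ m, ∑ k', ∑ l', x k' * P k' m * (y l' * Q l' m) := sum_rotate _
    _ = ∑ m, (∑ k', x k' * P k' m) * (∑ l', y l' * Q l' m) := by
        refine Finset.sum_congr rfl fun m _ => ?_
        rw [Finset.sum_mul_sum]

lemma gen_entry {N d : ℕ} (U : Matrix (Fin N × Fin d) (Fin N × Fin d) ℂ)
    (pa qa pb qb : Fin N) (k' l' : Fin d) :
    (envSlice Uᴴ (Pi.single qa 1) (Pi.single pa 1)
      * envSlice U (Pi.single pb 1) (Pi.single qb 1)) k' l'
    = ∑ m, conj' (U (pa,m) (qa,k')) * U (pb,m) (qb,l') := by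
  rw [Matrix.mul_apply]
  refine Finset.sum_congr rfl fun m _ => ?_
  have hL : envSlice Uᴴ (Pi.single qa 1) (Pi.single pa 1) k' m
      = conj' (U (pa,m) (qa,k')) := by
    simp only [envSlice, Matrix.of_apply]
    simp [Pi.single_apply, apply_ite conj', ite_mul, Matrix.conjTranspose_apply,
      ← starRingEnd_apply]
  have hR : envSlice U (Pi.single pb 1) (Pi.single qb 1) m l'
      = U (pb,m) (qb,l') := by
    simp only [envSlice, Matrix.of_apply]
    simp [Pi.single_apply, apply_ite conj', ite_mul]
  rw [hL, hR]

lemma inner_sandwich {d : ℕ} (G : Matrix (Fin d) (Fin d) ℂ) (x y : EuclideanSpace ℂ (Fin d)) :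
    ⟪x, Matrix.toEuclideanLin G y⟫_ℂ = ∑ k', ∑ l', conj' (x k') * (G k' l' * y l') := by
  simp only [PiLp.inner_apply, RCLike.inner_apply]
  refine Finset.sum_congr rfl fun k' _ => ?_
  have : (Matrix.toEuclideanLin G y) k' = ∑ l', G k' l' * y l' := rfl
  rw [this, Finset.sum_mul]
  exact Finset.sum_congr rfl fun _ _ => by ring

lemma key_orth {N d : ℕ} (U : Matrix (Fin N × Fin d) (Fin N × Fin d) ℂ)
    (hcom : ∀ a ∈ envActAlg U, ∀ b ∈ envActAlg U, a * b = b * a) :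
    ∃ ψ : Fin d → Fin d → ℂ,
      (∀ i j, ∑ k, conj' (ψ i k) * ψ j k = if i = j then 1 else 0) ∧
      (∀ k l, k ≠ l → ∀ pa qa pb qb,
        ∑ m, conj' (∑ r, U (pa,m) (qa,r) * ψ k r) * (∑ r, U (pb,m) (qb,r) * ψ l r) = 0) := by
  obtain ⟨bas, heig⟩ := exists_eigenbasis U hcom
  refine ⟨fun l k => bas l k, ?_, ?_⟩
  · intro i j
    have h := orthonormal_iff_ite.mp bas.orthonormal i j
    rw [PiLp.inner_apply] at h
    simpa [RCLike.inner_apply, mul_comm] using h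
  · intro k l hkl pa qa pb qb
    have hGmem : envSlice Uᴴ (Pi.single qa 1) (Pi.single pa 1)
        * envSlice U (Pi.single pb 1) (Pi.single qb 1) ∈ envActAlg U :=
      StarAlgebra.subset_adjoin ℂ _ ⟨_, _, _, _, rfl⟩
    obtain ⟨μ, hμ⟩ := heig _ hGmem l
    have h0 : ∑ k', ∑ l', conj' (bas k k')
        * ((envSlice Uᴴ (Pi.single qa 1) (Pi.single pa 1)
            * envSlice U (Pi.single pb 1) (Pi.single qb 1)) k' l' * bas l l') = 0 := by
      rw [← inner_sandwich, hμ, inner_smul_right, bas.orthonormal.2 hkl, mul_zero]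
    have h1 : ∑ k', ∑ l', conj' (bas k k')
        * ((envSlice Uᴴ (Pi.single qa 1) (Pi.single pa 1)
            * envSlice U (Pi.single pb 1) (Pi.single qb 1)) k' l' * bas l l')
        = ∑ m, conj' (∑ r, U (pa,m) (qa,r) * bas k r)
            * (∑ r, U (pb,m) (qb,r) * bas l r) := by
      simp only [gen_entry]
      rw [sum_factor]
      refine Finset.sum_congr rfl fun m _ => ?_
      congr 1
      · rw [map_sum]
        exact Finset.sum_congr rfl fun r _ => by rw [_root_.map_mul]; ring
      · exact Finset.sum_congr rfl fun r _ => by ring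
    rw [h1] at h0
    exact h0

set_option maxHeartbeats 800000 in
lemma forward {N d : ℕ} (hN : 0 < N) (hd : 0 < d)
    (U : Matrix (Fin N × Fin d) (Fin N × Fin d) ℂ)
    (hU : Uᴴ * U = 1)
    (hcom : ∀ a ∈ envActAlg U, ∀ b ∈ envActAlg U, a * b = b * a) :
    ∃ (φ ψ : Fin d → Fin d → ℂ) (Uop : Fin d → Matrix (Fin N) (Fin N) ℂ),
      (∀ i j, ∑ k, conj' (φ i k) * φ j k = if i = j then 1 else 0) ∧
      (∀ i j, ∑ k, conj' (ψ i k) * ψ j k = if i = j then 1 else 0) ∧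
      (∀ i, (Uop i)ᴴ * Uop i = 1 ∧ Uop i * (Uop i)ᴴ = 1) ∧
      U = ∑ i, Uop i ⊗ₖ Matrix.of (fun k l => φ i k * conj' (ψ i l)) := by
  classical
  obtain ⟨ψ, hψ, horth⟩ := key_orth U hcom
  set vv : Fin N → Fin N → Fin d → Fin d → ℂ :=
    fun p q l m => ∑ r, U (p,m) (q,r) * ψ l r with hvv
  have hUcol : ∀ x y : Fin N × Fin d,
      (∑ z, conj' (U z x) * U z y) = if x = y then 1 else 0 := by
    intro x y
    have h := congrFun (congrFun hU x) y
    simpa [Matrix.mul_apply, Matrix.conjTranspose_apply, Matrix.one_apply,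
      ← starRingEnd_apply] using h
  -- column normalization
  have hvnorm : ∀ l p q, ∑ b, ∑ m, conj' (vv b p l m) * vv b q l m
      = if p = q then 1 else 0 := by
    intro l p q
    have step1 : ∀ (b : Fin N) (m : Fin d), conj' (vv b p l m) * vv b q l m
        = ∑ r, ∑ r', (conj' (U (b,m) (p,r)) * U (b,m) (q,r'))
            * (conj' (ψ l r) * ψ l r') := by
      intro b m
      rw [hvv]
      simp only
      rw [map_sum, Finset.sum_mul_sum]
      exact Finset.sum_congr rfl fun r _ => Finset.sum_congr rfl fun r' _ => by
        rw [_root_.map_mul]; ring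
    simp only [step1]
    rw [sum_swap_pairs]
    have step2 : ∀ r r', ∑ b, ∑ m, (conj' (U (b,m) (p,r)) * U (b,m) (q,r'))
        * (conj' (ψ l r) * ψ l r')
        = (if (p,r) = (q,r') then 1 else 0) * (conj' (ψ l r) * ψ l r') := by
      intro r r'
      rw [← hUcol (p,r) (q,r'), Fintype.sum_prod_type, Finset.sum_mul]
      exact Finset.sum_congr rfl fun b _ => by rw [Finset.sum_mul]
    simp only [step2, Prod.mk.injEq]
    by_cases hpq : p = q
    · subst hpq
      simp only [true_and, if_pos rfl]
      have : ∀ r, ∑ r', (if r = r' then (1:ℂ) else 0) * (conj' (ψ l r) * ψ l r')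
          = conj' (ψ l r) * ψ l r := by
        intro r
        rw [Finset.sum_eq_single r]
        · simp
        · intro r' _ hr'; simp [Ne.symm hr']
        · intro habs; exact absurd (Finset.mem_univ r) habs
      simp only [this]
      rw [hψ l l]
      simp
    · simp [hpq]
  -- nonvanishing
  have hvne : ∀ l, ∃ p q, vv p q l ≠ 0 := by
    intro l
    by_contra hcon
    push_neg at hcon
    have h1 := hvnorm l ⟨0, hN⟩ ⟨0, hN⟩
    rw [if_pos rfl] at h1
    have h2 : ∑ b, ∑ m, conj' (vv b ⟨0,hN⟩ l m) * vv b ⟨0,hN⟩ l m = 0 := by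
      refine Finset.sum_eq_zero fun b _ => Finset.sum_eq_zero fun m _ => ?_
      rw [hcon b ⟨0,hN⟩, Pi.zero_apply]
      simp
    rw [h2] at h1
    exact one_ne_zero h1.symm
  choose pp qq hpq using hvne
  -- the φ vectors
  set wE : Fin d → EuclideanSpace ℂ (Fin d) :=
    fun l => (WithLp.equiv 2 (Fin d → ℂ)).symm (vv (pp l) (qq l) l) with hwE
  have hwne : ∀ l, wE l ≠ 0 := fun l h => hpq l (by
    have h' := congrArg (WithLp.equiv 2 (Fin d → ℂ)) h; simpa [hwE] using h')
  have hwnorm : ∀ l, ((‖wE l‖ : ℝ) : ℂ) ≠ 0 := fun l => by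
    simpa [Complex.ofReal_eq_zero, norm_eq_zero] using hwne l
  set φE : Fin d → EuclideanSpace ℂ (Fin d) :=
    fun l => (((‖wE l‖ : ℝ) : ℂ))⁻¹ • wE l with hφE
  -- inner products of the w's
  have hinner_w : ∀ k l, ⟪wE k, wE l⟫_ℂ
      = ∑ m, conj' (vv (pp k) (qq k) k m) * vv (pp l) (qq l) l m := by
    intro k l
    simp [PiLp.inner_apply, RCLike.inner_apply, hwE, mul_comm]
  have hw_orth : ∀ k l, k ≠ l → ⟪wE k, wE l⟫_ℂ = 0 := by
    intro k l hkl
    rw [hinner_w]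
    exact horth k l hkl (pp k) (qq k) (pp l) (qq l)
  have hφ_orthonormal : Orthonormal ℂ φE := by
    rw [orthonormal_iff_ite]
    intro i j
    by_cases hij : i = j
    · subst hij
      rw [if_pos rfl, hφE]
      simp only
      rw [inner_smul_left, inner_smul_right, inner_self_eq_norm_sq_to_K]
      rw [map_inv₀, Complex.conj_ofReal]
      field_simp
      rw [sq]
      rw [← sq]; exact div_self (pow_ne_zero 2 (hwnorm i))
    · rw [if_neg hij, hφE]
      simp only
      rw [inner_smul_left, inner_smul_right, hw_orth i j hij]
      simp
  -- orthonormal basis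
  have hcard : Fintype.card (Fin d) = Module.finrank ℂ (EuclideanSpace ℂ (Fin d)) := by
    simp
  haveI : Nonempty (Fin d) := ⟨⟨0, hd⟩⟩
  set B := basisOfOrthonormalOfCardEqFinrank hφ_orthonormal hcard with hB
  have hBcoe : ⇑B = φE := coe_basisOfOrthonormalOfCardEqFinrank _ _
  set ONB : OrthonormalBasis (Fin d) ℂ (EuclideanSpace ℂ (Fin d)) :=
    OrthonormalBasis.mk hφ_orthonormal (by rw [← hBcoe]; exact B.span_eq.ge) with hONB
  have hONBcoe : ⇑ONB = φE := OrthonormalBasis.coe_mk _ _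
  -- every vv is a multiple of φE l
  have hw_orth' : ∀ k l, k ≠ l → ∀ p q, ⟪φE k, (WithLp.equiv 2 (Fin d → ℂ)).symm (vv p q l)⟫_ℂ = 0 := by
    intro k l hkl p q
    rw [hφE]
    simp only
    rw [inner_smul_left]
    have hw_inner : ⟪wE k, (WithLp.equiv 2 (Fin d → ℂ)).symm (vv p q l)⟫_ℂ
        = ∑ m, conj' (vv (pp k) (qq k) k m) * vv p q l m := by
      simp [PiLp.inner_apply, RCLike.inner_apply, hwE, mul_comm]
    rw [hw_inner]
    have h9 : ∑ m, conj' (vv (pp k) (qq k) k m) * vv p q l m = 0 :=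
      horth k l hkl (pp k) (qq k) p q
    rw [h9, mul_zero]
  have hspan : ∀ p q l, (WithLp.equiv 2 (Fin d → ℂ)).symm (vv p q l)
      = ⟪φE l, (WithLp.equiv 2 (Fin d → ℂ)).symm (vv p q l)⟫_ℂ • φE l := by
    intro p q l
    have hexp := ONB.sum_repr' ((WithLp.equiv 2 (Fin d → ℂ)).symm (vv p q l))
    refine hexp.symm.trans ?_
    rw [Finset.sum_eq_single l]
    · rw [congrFun hONBcoe l]
    · intro k _ hkl
      rw [congrFun hONBcoe k, hw_orth' k l hkl p q, zero_smul]
    · intro habs; exact absurd (Finset.mem_univ l) habs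
  -- define Uop
  set Uop : Fin d → Matrix (Fin N) (Fin N) ℂ :=
    fun l => Matrix.of fun p q => ⟪φE l, (WithLp.equiv 2 (Fin d → ℂ)).symm (vv p q l)⟫_ℂ
    with hUop
  have hpoint : ∀ p q l m, vv p q l m = Uop l p q * φE l m := by
    intro p q l m
    have h5 := hspan p q l
    have h6 : vv p q l m
        = (⟪φE l, (WithLp.equiv 2 (Fin d → ℂ)).symm (vv p q l)⟫_ℂ • φE l) m := by
      exact congrFun (congrArg (fun (x : EuclideanSpace ℂ (Fin d)) => (x : Fin d → ℂ)) h5) m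
    rw [h6, hUop]
    simp [PiLp.smul_apply, smul_eq_mul]
  -- φ as functions and orthonormality sums
  have hφsum : ∀ i j, ∑ k, conj' (φE i k) * φE j k = if i = j then 1 else 0 := by
    intro i j
    have h := orthonormal_iff_ite.mp hφ_orthonormal i j
    rw [PiLp.inner_apply] at h
    simpa [RCLike.inner_apply, mul_comm] using h
  -- unitarity
  have hUopU : ∀ l, (Uop l)ᴴ * Uop l = 1 := by
    intro l
    ext p q
    rw [Matrix.mul_apply, Matrix.one_apply]
    have h7 : ∀ b, (Uop l)ᴴ p b * Uop l b q
        = ∑ m, conj' (vv b p l m) * vv b q l m := by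
      intro b
      rw [Matrix.conjTranspose_apply, ← starRingEnd_apply]
      calc conj' (Uop l b p) * Uop l b q
          = (conj' (Uop l b p) * Uop l b q) * ∑ m, conj' (φE l m) * φE l m := by
            rw [hφsum l l, if_pos rfl, mul_one]
        _ = ∑ m, conj' (vv b p l m) * vv b q l m := by
            rw [Finset.mul_sum]
            refine Finset.sum_congr rfl fun m _ => ?_
            rw [hpoint b p l m, hpoint b q l m, _root_.map_mul]
            ring
    simp only [h7]
    exact hvnorm l p q
  -- the final decomposition
  have hcomp := rows_complete ψ hψ
  have hfinal : U = ∑ i, Uop i ⊗ₖ Matrix.of (fun k l => φE i k * conj' (ψ i l)) := by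
    ext ⟨p, m⟩ ⟨q, r⟩
    have hrhs : (∑ i, Uop i ⊗ₖ Matrix.of (fun k l => φE i k * conj' (ψ i l))) (p,m) (q,r)
        = ∑ l, Uop l p q * (φE l m * conj' (ψ l r)) := by
      rw [Matrix.sum_apply]
      exact Finset.sum_congr rfl fun l _ => by
        rw [Matrix.kroneckerMap_apply, Matrix.of_apply]
    rw [hrhs]
    calc U (p,m) (q,r)
        = ∑ r', U (p,m) (q,r') * (if r' = r then 1 else 0) := by
          rw [Finset.sum_eq_single r]
          · simp
          · intro r' _ hr'; simp [hr']
          · intro habs; exact absurd (Finset.mem_univ r) habs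
      _ = ∑ r', U (p,m) (q,r') * ∑ l, ψ l r' * conj' (ψ l r) := by
          exact Finset.sum_congr rfl fun r' _ => by rw [hcomp r' r]
      _ = ∑ r', ∑ l, U (p,m) (q,r') * ψ l r' * conj' (ψ l r) := by
          refine Finset.sum_congr rfl fun r' _ => ?_
          rw [Finset.mul_sum]
          exact Finset.sum_congr rfl fun l _ => by ring
      _ = ∑ l, ∑ r', U (p,m) (q,r') * ψ l r' * conj' (ψ l r) := Finset.sum_comm
      _ = ∑ l, vv p q l m * conj' (ψ l r) := by
          refine Finset.sum_congr rfl fun l _ => ?_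
          rw [hvv]
          simp only
          rw [Finset.sum_mul]
      _ = ∑ l, Uop l p q * (φE l m * conj' (ψ l r)) := by
          refine Finset.sum_congr rfl fun l _ => ?_
          rw [hpoint p q l m]
          ring
  exact ⟨fun l k => φE l k, ψ, Uop, hφsum, hψ, fun i =>
    ⟨hUopU i, mul_eq_one_comm.mp (hUopU i)⟩, hfinal⟩

end
end EnvAux

/-- `A_r(U)` is commutative iff `U = ∑ᵢ Uᵢ ⊗ |φᵢ⟩⟨ψᵢ|` for orthonormal bases
`(φᵢ)`, `(ψᵢ)` of `ℂ^d` and unitaries `Uᵢ` on the system. -/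
theorem envActAlg_commutative_iff (N d : ℕ) (hN : 0 < N) (hd : 0 < d)
    (U : Matrix (Fin N × Fin d) (Fin N × Fin d) ℂ)
    (hU : Uᴴ * U = 1) (hU' : U * Uᴴ = 1) :
    (∀ a ∈ envActAlg U, ∀ b ∈ envActAlg U, a * b = b * a) ↔
    ∃ (φ ψ : Fin d → Fin d → ℂ) (Uop : Fin d → Matrix (Fin N) (Fin N) ℂ),
      (∀ i j, ∑ k, (starRingEnd ℂ) (φ i k) * φ j k = if i = j then 1 else 0) ∧
      (∀ i j, ∑ k, (starRingEnd ℂ) (ψ i k) * ψ j k = if i = j then 1 else 0) ∧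
      (∀ i, (Uop i)ᴴ * Uop i = 1 ∧ Uop i * (Uop i)ᴴ = 1) ∧
      U = ∑ i, Uop i ⊗ₖ Matrix.of (fun k l => φ i k * (starRingEnd ℂ) (ψ i l)) := by
  constructor
  · intro h
    exact EnvAux.forward hN hd U hU h
  · rintro ⟨φ, ψ, Uop, hφ, hψ, hUop, hUeq⟩
    exact EnvAux.backward U φ ψ Uop hφ hψ hUeq
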